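/- Exactness of TT cross interpolation with nested pivots for an exactly rank-constrained tensor: let f : [d1]×⋯×[dn] → ℝ admit a TT representation with ranks r_1,…,r_{n−1}, let 𝐱 be a set of N pivots whose partial pivot sets 𝐱_{1:k}, 𝐱_{k+1:n} satisfy that each matrix f(𝐱_{1:k}, 𝐱_{k+1:n}) is invertible of size N×N with rank equal to the rank of the full unfolding f(x_{1:k}, x_{k+1:n}). Then the cores G_1 = f([d1], 𝐱_{2:n}), G_k = f(𝐱_{1:k−1}, 𝐱_{k:n})^{−1} f(𝐱_{1:k−1}, [d_k], 𝐱_{k+1:n}) for 2 ≤ k ≤ n−1, and G_n = f(𝐱_{1:n−1}, 𝐱_n)^{−1} f(𝐱_{1:n−1}, [d_n]) contract to reproduce f exactly: f(x_1,…,x_n) = G_1(x_1,·)G_2(·,x_2,·)⋯G_n(·,x_n). -/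

import Mathlib

open Matrix BigOperators

noncomputable section

/-- Partial product of tensor-train cores: a matrix from rank `r 0` to rank `r k`. -/
def ttMat (n : ℕ) (d r : ℕ → ℕ)
    (G : ∀ k : Fin n, Fin (r k) → Fin (d k) → Fin (r (k + 1)) → ℝ)
    (x : ∀ i : Fin n, Fin (d i)) :
    (k : ℕ) → k ≤ n → Matrix (Fin (r 0)) (Fin (r k)) ℝ
  | 0, _ => 1
  | (k + 1), h =>
      ttMat n d r G x k (Nat.le_of_succ_le h) *
        Matrix.of (fun a b => G ⟨k, h⟩ a (x ⟨k, h⟩) b)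

/-- The scalar function represented by a tensor train (boundary ranks `r 0 = r n = 1`). -/
def ttFun (n : ℕ) (d r : ℕ → ℕ)
    (G : ∀ k : Fin n, Fin (r k) → Fin (d k) → Fin (r (k + 1)) → ℝ)
    (x : ∀ i : Fin n, Fin (d i)) : ℝ :=
  ∑ a : Fin (r 0), ∑ b : Fin (r n), ttMat n d r G x n le_rfl a b

/-- The `k`-th unfolding matrix of a tensor: rows are the first `k` variables,
columns the remaining `n - k` variables. -/
def unfold (n : ℕ) (d : ℕ → ℕ) (f : (∀ i : Fin n, Fin (d i)) → ℝ) (k : ℕ) (hk : k ≤ n) :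
    Matrix (∀ i : Fin k, Fin (d i)) (∀ j : Fin (n - k), Fin (d (k + j))) ℝ :=
  Matrix.of fun a b =>
    f (fun i =>
      if h : i.val < k then a ⟨i.val, h⟩
      else
        have h2 : i.val - k < n - k := by have := i.isLt; omega
        Fin.cast (congrArg d (show k + (i.val - k) = i.val by omega)) (b ⟨i.val - k, h2⟩))

/-- The configuration whose coordinates below `s` come from `u`, coordinate `s` from
`v`, and coordinates above `s` from `w`. -/
def pt (n : ℕ) (d : ℕ → ℕ) (u v w : ∀ i : Fin n, Fin (d i)) (s : ℕ) :
    ∀ i : Fin n, Fin (d i) :=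
  fun i => if i.val < s then u i else if s < i.val then w i else v i

/-- The `N × N` cross matrix of `f` at split `t` (first `t` coordinates from the row
pivot, the rest from the column pivot): `f(𝐱_{1:t}, 𝐱_{t+1:n})`. -/
def crossMat (n N : ℕ) (d : ℕ → ℕ) (f : (∀ i : Fin n, Fin (d i)) → ℝ)
    (X : Fin N → ∀ i : Fin n, Fin (d i)) (t : ℕ) : Matrix (Fin N) (Fin N) ℝ :=
  Matrix.of fun i j => f (pt n d (X i) (X j) (X j) t)

/-- The TT-CI middle core at (0-based) site `t`, evaluated at configuration `x`:
`f(𝐱_{1:t}, 𝐱_{t+1:n})⁻¹ · f(𝐱_{1:t}, x_t, 𝐱_{t+2:n})`. -/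
def coreMat (n N : ℕ) (d : ℕ → ℕ) (f : (∀ i : Fin n, Fin (d i)) → ℝ)
    (X : Fin N → ∀ i : Fin n, Fin (d i)) (x : ∀ i : Fin n, Fin (d i)) (t : ℕ) :
    Matrix (Fin N) (Fin N) ℝ :=
  (crossMat n N d f X t)⁻¹ * Matrix.of fun i j => f (pt n d (X i) x (X j) t)

/-- Product of the TT-CI middle cores at sites `1, …, k`. -/
def midProd (n N : ℕ) (d : ℕ → ℕ) (f : (∀ i : Fin n, Fin (d i)) → ℝ)
    (X : Fin N → ∀ i : Fin n, Fin (d i)) (x : ∀ i : Fin n, Fin (d i)) :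
    ℕ → Matrix (Fin N) (Fin N) ℝ
  | 0 => 1
  | (k + 1) => midProd n N d f X x k * coreMat n N d f X x (k + 1)

/-- The full TT-CI interpolation of `f`: the contraction
`G₁(x₁,·) G₂(·,x₂,·) ⋯ Gₙ(·,xₙ)` with
`G₁ = f([d₁], 𝐱_{2:n})`, `G_k = f(𝐱_{1:k-1}, 𝐱_{k:n})⁻¹ f(𝐱_{1:k-1}, [d_k], 𝐱_{k+1:n})`
and `G_n = f(𝐱_{1:n-1}, 𝐱_n)⁻¹ f(𝐱_{1:n-1}, [d_n])`. -/
def fCI (n N : ℕ) (d : ℕ → ℕ) (f : (∀ i : Fin n, Fin (d i)) → ℝ)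
    (X : Fin N → ∀ i : Fin n, Fin (d i)) (x : ∀ i : Fin n, Fin (d i)) : ℝ :=
  dotProduct
    (Matrix.vecMul (fun j => f (pt n d (X j) x (X j) 0))
      (midProd n N d f X x (n - 2)))
    ((crossMat n N d f X (n - 1))⁻¹.mulVec fun i => f (pt n d (X i) x (X i) (n - 1)))

-- auxiliary lemmas

lemma cur_general {P Q : Type*} [Fintype P] [Fintype Q] [DecidableEq P] [DecidableEq Q]
    {N : ℕ} (M : Matrix P Q ℝ) (ρ : Fin N → P) (γ : Fin N → Q)
    (hA : IsUnit (M.submatrix ρ γ)) (hr : (M.submatrix ρ γ).rank = M.rank) :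
    ∀ p q, M p q = ∑ i, ∑ i', M p (γ i) * (M.submatrix ρ γ)⁻¹ i i' * M (ρ i') q := by
  intro p q
  set A := M.submatrix ρ γ with hAdef
  set C : Matrix P (Fin N) ℝ := M.submatrix id γ with hCdef
  have hCS : C = M * Matrix.of (fun q' j => if q' = γ j then (1:ℝ) else 0) := by
    ext p' j
    simp [hCdef, Matrix.mul_apply, Finset.sum_ite_eq']
  have hAC : A = Matrix.of (fun i p' => if p' = ρ i then (1:ℝ) else 0) * C := by
    ext i j
    simp [hAdef, hCdef, Matrix.mul_apply, Finset.sum_ite_eq']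
  have hrankA : A.rank = N := by
    rw [Matrix.rank_of_isUnit A hA, Fintype.card_fin]
  have hrankC_le : C.rank ≤ N := le_trans (Matrix.rank_le_card_width C) (by simp)
  have hrankA_le : A.rank ≤ C.rank := by
    rw [hAC]; exact Matrix.rank_mul_le_right _ _
  have hrankC : C.rank = N := le_antisymm hrankC_le (by omega)
  have hrangele : LinearMap.range C.mulVecLin ≤ LinearMap.range M.mulVecLin := by
    rw [hCS, Matrix.mulVecLin_mul]
    exact LinearMap.range_comp_le_range _ _
  have hrange : LinearMap.range C.mulVecLin = LinearMap.range M.mulVecLin := by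
    apply Submodule.eq_of_le_of_finrank_le hrangele
    show M.rank ≤ C.rank
    rw [← hr, hrankA, hrankC]
  have hcol : (fun p' => M p' q) ∈ LinearMap.range C.mulVecLin := by
    rw [hrange]
    refine ⟨Pi.single q 1, ?_⟩
    ext p'
    simp [Matrix.mulVecLin, Matrix.mulVec, dotProduct, Pi.single_apply]
  obtain ⟨v, hv⟩ := hcol
  have hvA : A.mulVec v = fun i => M (ρ i) q := by
    ext i
    have := congrFun hv (ρ i)
    simpa [Matrix.mulVecLin, hAdef, hCdef, Matrix.mulVec, dotProduct] using this
  have hvsol : v = A⁻¹.mulVec (fun i => M (ρ i) q) := by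
    rw [← hvA, Matrix.mulVec_mulVec,
      Matrix.nonsing_inv_mul A (Matrix.isUnit_iff_isUnit_det A |>.mp hA), Matrix.one_mulVec]
  have hvp := congrFun hv p
  rw [hvsol] at hvp
  rw [← hvp]
  simp [Matrix.mulVecLin, Matrix.mulVec, dotProduct, hCdef, Finset.mul_sum, mul_assoc]

lemma cast_pt {n : ℕ} {d : ℕ → ℕ} (y : ∀ i : Fin n, Fin (d i)) (a b : Fin n)
    (hab : a = b) (hd : d ↑a = d ↑b) : Fin.cast hd (y a) = y b := by
  subst hab; rfl

/-- configuration gluing: first `k` coordinates from `x`, the rest from `y`. -/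
def glue (n : ℕ) (d : ℕ → ℕ) (x y : ∀ i : Fin n, Fin (d i)) (k : ℕ) :
    ∀ i : Fin n, Fin (d i) :=
  fun m => if m.val < k then x m else y m

lemma unfold_apply_glue (n : ℕ) (d : ℕ → ℕ) (f : (∀ i : Fin n, Fin (d i)) → ℝ)
    (k : ℕ) (hk : k ≤ n) (x y : ∀ i : Fin n, Fin (d i)) :
    unfold n d f k hk (fun t : Fin k => x ⟨t.val, by omega⟩)
      (fun t : Fin (n - k) => y ⟨k + t.val, by omega⟩) = f (glue n d x y k) := by
  show f _ = f _
  congr 1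
  funext m
  by_cases h : m.val < k
  · simp [glue, h]
  · simp only [glue, h, dif_neg, if_neg]
    exact cast_pt y ⟨k + (m.val - k), by omega⟩ m
      (Fin.ext (by show k + (m.val - k) = m.val; omega))
      (congrArg d (by show k + (m.val - k) = m.val; omega))

lemma cur_pointwise (n N : ℕ) (d : ℕ → ℕ) (f : (∀ i : Fin n, Fin (d i)) → ℝ)
    (X : Fin N → ∀ i : Fin n, Fin (d i)) (k : ℕ) (hk : k ≤ n)
    (hU : IsUnit (crossMat n N d f X k))
    (hrk : (crossMat n N d f X k).rank = (unfold n d f k hk).rank) :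
    ∀ x y, f (glue n d x y k) =
      ∑ i, ∑ i', f (glue n d x (X i) k) * (crossMat n N d f X k)⁻¹ i i' *
        f (glue n d (X i') y k) := by
  intro x y
  set ρ : Fin N → (∀ i : Fin k, Fin (d i)) := fun i t => X i ⟨t.val, by omega⟩ with hρ
  set γ : Fin N → (∀ j : Fin (n - k), Fin (d (k + j))) :=
    fun i t => X i ⟨k + t.val, by omega⟩ with hγ
  have hsub : crossMat n N d f X k = (unfold n d f k hk).submatrix ρ γ := by
    ext i j
    have h1 : (unfold n d f k hk).submatrix ρ γ i j = f (glue n d (X i) (X j) k) :=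
      unfold_apply_glue n d f k hk (X i) (X j)
    rw [h1]
    show f _ = f _
    congr 1
    funext m
    simp only [pt, glue]
    split_ifs with h1 h2 <;> first | rfl | omega
  have hU' : IsUnit ((unfold n d f k hk).submatrix ρ γ) := hsub ▸ hU
  have hrk' : ((unfold n d f k hk).submatrix ρ γ).rank = (unfold n d f k hk).rank :=
    hsub ▸ hrk
  have key := cur_general (unfold n d f k hk) ρ γ hU' hrk'
    (fun t : Fin k => x ⟨t.val, by omega⟩)
    (fun t : Fin (n - k) => y ⟨k + t.val, by omega⟩)
  rw [unfold_apply_glue n d f k hk x y] at key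
  rw [key, ← hsub]
  refine Finset.sum_congr rfl fun i _ => Finset.sum_congr rfl fun i' _ => ?_
  congr 1
  · congr 1
    exact unfold_apply_glue n d f k hk x (X i)
  · exact unfold_apply_glue n d f k hk (X i') y

/-- Exactness of TT cross interpolation with nested pivots: if `f` admits a TT
representation with ranks `r`, and every cross matrix at splits `1, …, n-1` is
invertible with rank equal to the rank of the corresponding full unfolding matrix,
then the TT-CI cores contract to reproduce `f` exactly. -/
theorem tt_ci_exact (n N : ℕ) (hn : 2 ≤ n) (d r : ℕ → ℕ) (hr0 : r 0 = 1) (hrn : r n = 1)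
    (f : (∀ i : Fin n, Fin (d i)) → ℝ)
    (hTT : ∃ G : ∀ k : Fin n, Fin (r k) → Fin (d k) → Fin (r (k + 1)) → ℝ,
      ∀ x, ttFun n d r G x = f x)
    (X : Fin N → ∀ i : Fin n, Fin (d i))
    (hcross : ∀ k (hk1 : 1 ≤ k) (hk2 : k ≤ n - 1),
      IsUnit (crossMat n N d f X k) ∧
        (crossMat n N d f X k).rank = (unfold n d f k (by omega)).rank) :
    ∀ x, fCI n N d f X x = f x := by
  intro x
  -- the pointwise CUR identity at every admissible split
  have key : ∀ k, 1 ≤ k → k ≤ n - 1 → ∀ y z, f (glue n d y z k) =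
      ∑ i, ∑ i', f (glue n d y (X i) k) * (crossMat n N d f X k)⁻¹ i i' *
        f (glue n d (X i') z k) := by
    intro k hk1 hk2
    exact cur_pointwise n N d f X k (by omega) (hcross k hk1 hk2).1 (hcross k hk1 hk2).2
  -- induction on the middle product
  have hmid : ∀ k, k ≤ n - 2 →
      Matrix.vecMul (fun j => f (pt n d (X j) x (X j) 0)) (midProd n N d f X x k)
        = fun j => f (glue n d x (X j) (k + 1)) := by
    intro k
    induction k with
    | zero =>
      intro _
      funext j
      show Matrix.vecMul _ (1 : Matrix (Fin N) (Fin N) ℝ) j = _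
      rw [Matrix.vecMul_one]
      show f _ = f _
      congr 1
      funext m
      simp only [pt, glue]
      split_ifs <;> first | rfl | omega
    | succ k ih =>
      intro hk
      have hk' : k ≤ n - 2 := by omega
      show Matrix.vecMul _ (midProd n N d f X x k * coreMat n N d f X x (k + 1)) = _
      rw [← Matrix.vecMul_vecMul, ih hk']
      funext j
      show Matrix.vecMul _ ((crossMat n N d f X (k+1))⁻¹ * _) j = _
      rw [← Matrix.vecMul_vecMul]
      have hkey := key (k + 1) (by omega) (by omega) x
        (fun m => if (k + 1 : ℕ) < m.val then X j m else x m)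
      have hL : glue n d x (fun m => if (k + 1 : ℕ) < m.val then X j m else x m) (k + 1)
          = glue n d x (X j) (k + 1 + 1) := by
        funext m
        simp only [glue]
        split_ifs <;> first | rfl | omega
      rw [hL] at hkey
      rw [hkey]
      have hR : ∀ i' : Fin N,
          f (glue n d (X i') (fun m => if (k + 1 : ℕ) < m.val then X j m else x m) (k + 1))
            = f (pt n d (X i') x (X j) (k + 1)) := fun i' => rfl
      simp only [hR]
      simp only [Matrix.vecMul, dotProduct, Matrix.of_apply, Finset.sum_mul]
      rw [Finset.sum_comm]
  -- final contraction
  have hfinal := hmid (n - 2) le_rfl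
  have hn1 : n - 2 + 1 = n - 1 := by omega
  rw [hn1] at hfinal
  show dotProduct (Matrix.vecMul _ _) _ = f x
  rw [hfinal]
  have hkey := key (n - 1) (by omega) (by omega) x x
  have hgx : glue n d x x (n - 1) = x := by
    funext m
    simp only [glue]
    split_ifs <;> rfl
  rw [hgx] at hkey
  rw [hkey]
  simp only [dotProduct, Matrix.mulVec, dotProduct, Finset.mul_sum]
  refine Finset.sum_congr rfl fun i _ => Finset.sum_congr rfl fun i' _ => ?_
  have hw : f (pt n d (X i') x (X i') (n - 1)) = f (glue n d (X i') x (n - 1)) := by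
    congr 1
    funext m
    simp only [pt, glue]
    split_ifs with h1 h2 <;> first | rfl | (exact absurd m.isLt (by omega))
  rw [hw]
  ring


end
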